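/- Let A be a commutative ring of Krull dimension < n (n ≥ 0), and let a, b₁, …, bₙ ∈ A with 1 ∈ (a, b₁, …, bₙ). Then there exist x₁, …, xₙ ∈ A such that 1 ∈ (b₁ + a·x₁, …, bₙ + a·xₙ). -/

import Mathlib

open Ideal Order

universe u

private lemma krullDim_lt_of_forall {α : Type*} [Preorder α] {n : ℕ}
    (h : ∀ p : LTSeries α, p.length < n) : Order.krullDim α < n := by
  cases isEmpty_or_nonempty α with
  | inl he =>
    rw [krullDim_eq_bot]
    exact_mod_cast WithBot.bot_lt_coe _
  | inr hne =>
    have hn : 0 < n := h (RelSeries.singleton _ (Classical.arbitrary α))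
    obtain ⟨m, rfl⟩ := Nat.exists_eq_succ_of_ne_zero hn.ne'
    rw [krullDim_eq_iSup_length]
    have h1 : (⨆ p : LTSeries α, (p.length : ℕ∞)) ≤ (m : ℕ∞) := by
      refine iSup_le fun p => ?_
      exact_mod_cast Nat.lt_succ_iff.mp (h p)
    refine lt_of_le_of_lt (WithBot.coe_le_coe.mpr h1) ?_
    exact_mod_cast Nat.lt_succ_self m

private lemma dim_quot_bdry_lt {A : Type*} [CommRing A] {n : ℕ}
    (hdim : ringKrullDim A < (n + 1 : ℕ)) (l : A)
    (I : Ideal A) (hI : I = Ideal.span {l} ⊔ (nilradical A).colon (Ideal.span {l})) :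
    ringKrullDim (A ⧸ I) < n := by
  -- no minimal prime contains I
  have key : ∀ m0 : Ideal A, m0 ∈ minimalPrimes A → ¬(I ≤ m0) := by
    intro m0 hmin hle
    haveI hm0prime : m0.IsPrime := hmin.1.1
    have hl : l ∈ m0 := hle (hI ▸ Ideal.mem_sup_left (Ideal.mem_span_singleton_self l))
    have hnil : IsNilpotent (algebraMap A (Localization m0.primeCompl) l) := by
      have hr := IsLocalization.AtPrime.radical_map_of_mem_minimalPrimes
        (A := Localization m0.primeCompl) m0 ⊥ hmin
      have hx : algebraMap A (Localization m0.primeCompl) l ∈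
          (Ideal.map (algebraMap A (Localization m0.primeCompl)) (⊥ : Ideal A)).radical :=
        hr ▸ Ideal.mem_map_of_mem _ hl
      rw [Ideal.map_bot] at hx
      obtain ⟨k, hk⟩ := hx
      exact ⟨k, by simpa using hk⟩
    obtain ⟨k, hk⟩ := hnil
    rw [← _root_.map_pow] at hk
    obtain ⟨s, hs⟩ := (IsLocalization.map_eq_zero_iff m0.primeCompl _ _).mp hk
    have hsl : IsNilpotent ((s : A) * l) := by
      refine ⟨k + 1, ?_⟩
      calc ((s : A) * l) ^ (k + 1) = ((s : A) * l ^ k) * ((s : A) ^ k * l) := by ring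
      _ = 0 := by rw [hs, zero_mul]
    have hsI : (s : A) ∈ I :=
      hI ▸ Ideal.mem_sup_right (Ideal.mem_colon_span_singleton.mpr (mem_nilradical.mpr hsl))
    exact s.2 (hle hsI)
  refine krullDim_lt_of_forall fun p => ?_
  set f : PrimeSpectrum (A ⧸ I) → PrimeSpectrum A :=
    fun q => ⟨q.asIdeal.comap (Ideal.Quotient.mk I), inferInstance⟩ with hf
  have hfmono : StrictMono f := by
    refine Monotone.strictMono_of_injective (fun _ _ hab => Ideal.comap_mono hab) ?_
    intro x y hxy
    exact PrimeSpectrum.ext_iff.mpr <|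
      Ideal.comap_injective_of_surjective _ Ideal.Quotient.mk_surjective <| by
        simpa [hf] using hxy
  set q₁ := p.map f hfmono with hq₁
  have hIP : I ≤ q₁.head.asIdeal := by
    intro y hy
    show Ideal.Quotient.mk I y ∈ p.head.asIdeal
    rw [Ideal.Quotient.eq_zero_iff_mem.mpr hy]
    exact zero_mem _
  haveI : q₁.head.asIdeal.IsPrime := q₁.head.isPrime
  obtain ⟨m0, hm0min, hm0le⟩ :=
    Ideal.exists_minimalPrimes_le (bot_le : (⊥ : Ideal A) ≤ q₁.head.asIdeal)
  haveI hm0prime : m0.IsPrime := hm0min.1.1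
  have hne : m0 ≠ q₁.head.asIdeal := by
    intro hEq
    exact key m0 hm0min (hEq ▸ hIP)
  have hlt : (⟨m0, hm0prime⟩ : PrimeSpectrum A) < q₁.head := by
    refine lt_of_le_of_ne hm0le ?_
    intro hEq
    exact hne (congrArg PrimeSpectrum.asIdeal hEq)
  have hlen := LTSeries.length_le_krullDim (q₁.cons ⟨m0, hm0prime⟩ hlt)
  have h2 : p.length + 1 < n + 1 := by
    have := hlen.trans_lt hdim
    simp only [RelSeries.cons_length] at this
    have hq1len : q₁.length = p.length := rfl
    rw [hq1len] at this
    exact_mod_cast this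
  omega

private lemma dim_lt_zero_eq_zero {A : Type*} [CommRing A]
    (hdim : ringKrullDim A < ((0 : ℕ) : WithBot ℕ∞)) : (1 : A) = 0 := by
  by_contra h
  have : Nontrivial A := ⟨1, 0, h⟩
  have h0 : (0 : WithBot ℕ∞) ≤ ringKrullDim A := ringKrullDim_nonneg_of_nontrivial
  rw [show ((0 : ℕ) : WithBot ℕ∞) = 0 by norm_cast] at hdim
  exact absurd (h0.trans_lt hdim) (lt_irrefl _)

/-- Core algebraic lemma: if `1 = u*b + w` with `w*b` nilpotent and `1 ∈ (a, b)`,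
then `1 ∈ (b + a*x)` for some `x`. -/
private lemma core_lemma {B : Type*} [CommRing B] (a b u w : B)
    (h1 : u * b + w = 1) (hnil : IsNilpotent (w * b))
    (hun : (1 : B) ∈ Ideal.span ({a, b} : Set B)) :
    ∃ x : B, (1 : B) ∈ Ideal.span ({b + a * x} : Set B) := by
  obtain ⟨m₀, hm₀⟩ := hnil
  set M := m₀ + 1 with hM
  have hwb : (w * b) ^ M = 0 := by rw [hM, pow_succ, hm₀, zero_mul]
  have hfb : w ^ M * b ^ M = 0 := by rw [← mul_pow, hwb]
  -- 1 - w^M = b * h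
  have hdvd1 : b ∣ 1 - w ^ M := by
    have h₁ : b ∣ 1 - w := ⟨u, by linear_combination -h1⟩
    have h₂ := sub_dvd_pow_sub_pow 1 w M
    rw [one_pow] at h₂
    exact dvd_trans h₁ h₂
  obtain ⟨h, hh⟩ := hdvd1
  set e := (b * h) ^ M with he
  have hdvd2 : w ^ M ∣ 1 - e := by
    have h₁ : w ^ M ∣ 1 - b * h := ⟨1, by rw [mul_one]; linear_combination hh⟩
    have h₂ := sub_dvd_pow_sub_pow 1 (b * h) M
    rw [one_pow] at h₂
    exact dvd_trans h₁ h₂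
  obtain ⟨g, hg⟩ := hdvd2
  have hidem : e * (1 - e) = 0 := by
    rw [hg, he, mul_pow]
    calc b ^ M * h ^ M * (w ^ M * g) = (w ^ M * b ^ M) * (h ^ M * g) := by ring
    _ = 0 := by rw [hfb, zero_mul]
  obtain ⟨α, β, hαβ⟩ := Ideal.mem_span_pair.mp hun
  -- in B ⧸ (e), a is a unit
  set π : B →+* B ⧸ Ideal.span ({e} : Set B) := Ideal.Quotient.mk _ with hπ
  have hπe : π e = 0 := Ideal.Quotient.eq_zero_iff_mem.mpr (Ideal.mem_span_singleton_self e)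
  have hbh_nil : IsNilpotent (π (b * h)) := ⟨M, by rw [← _root_.map_pow, ← he, hπe]⟩
  have hfunit : IsUnit (π (w ^ M)) := by
    have heq : π (w ^ M) = 1 - π (b * h) := by
      rw [← _root_.map_one π, ← _root_.map_sub]
      exact congrArg π (by linear_combination -hh)
    rw [heq]
    exact hbh_nil.isUnit_one_sub
  have hbnil : IsNilpotent (π b) := by
    obtain ⟨v, hv⟩ := hfunit.exists_left_inv
    refine ⟨M, ?_⟩
    have h0 : π (w ^ M) * π b ^ M = 0 := by
      rw [← _root_.map_pow, ← _root_.map_mul, hfb, _root_.map_zero]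
    calc π b ^ M = (v * π (w ^ M)) * π b ^ M := by rw [hv, one_mul]
    _ = v * (π (w ^ M) * π b ^ M) := by ring
    _ = 0 := by rw [h0, mul_zero]
  have haunit : IsUnit (π a) := by
    have h₂ : π α * π a = 1 - π β * π b := by
      rw [← _root_.map_mul, ← _root_.map_mul, show α * a = 1 - β * b by linear_combination hαβ,
        _root_.map_sub, _root_.map_one]
    have hU : IsUnit (π α * π a) := by
      rw [h₂]
      exact (((Commute.all (π β) (π b)).isNilpotent_mul_left hbnil)).isUnit_one_sub
    exact isUnit_of_mul_isUnit_right hU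
  obtain ⟨vu, hvu⟩ := haunit.exists_right_inv
  obtain ⟨s, hs⟩ := Ideal.Quotient.mk_surjective (vu * π (1 - b))
  have hπas : π (a * s - (1 - b)) = 0 := by
    rw [_root_.map_sub, _root_.map_mul, hs, ← mul_assoc, hvu, one_mul, sub_self]
  obtain ⟨c, hc⟩ := Ideal.mem_span_singleton'.mp (Ideal.Quotient.eq_zero_iff_mem.mp hπas)
  -- hc : c * e = a * s - (1 - b)
  refine ⟨(1 - e) * s, ?_⟩
  set v := b + a * ((1 - e) * s) with hv
  have hv1 : v = 1 + e * (c - a * s) := by rw [hv]; linear_combination -hc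
  have hmem1 : (1 : B) ∈ Ideal.span ({v, e} : Set B) :=
    Ideal.mem_span_pair.mpr ⟨1, -(c - a * s), by linear_combination hv1⟩
  have hd3 : (1 - e) ∣ v ^ M - b ^ M := by
    have h₁ : (1 - e) ∣ v - b := ⟨a * s, by rw [hv]; ring⟩
    exact dvd_trans h₁ (sub_dvd_pow_sub_pow v b M)
  obtain ⟨t, ht⟩ := hd3
  have hmem2 : (1 : B) ∈ Ideal.span ({v, 1 - e} : Set B) := by
    refine Ideal.mem_span_pair.mpr ⟨v ^ (M - 1) * h ^ M, 1 - t * h ^ M, ?_⟩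
    have hvM : v ^ (M - 1) * h ^ M * v = v ^ M * h ^ M := by
      rw [hM]
      calc v ^ (m₀ + 1 - 1) * h ^ (m₀ + 1) * v
          = (v ^ m₀ * v) * h ^ (m₀ + 1) := by rw [Nat.add_sub_cancel]; ring
        _ = v ^ (m₀ + 1) * h ^ (m₀ + 1) := by rw [← pow_succ]
    have heq : e = b ^ M * h ^ M := by rw [he, mul_pow]
    have hexp : v ^ M * h ^ M = ((1 - e) * t) * h ^ M + e := by
      rw [← ht, heq]; ring
    rw [hvM, hexp]
    ring
  obtain ⟨p1, q1, hpq1⟩ := Ideal.mem_span_pair.mp hmem1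
  obtain ⟨p2, q2, hpq2⟩ := Ideal.mem_span_pair.mp hmem2
  have hprod : (p1 * v + q1 * e) * (p2 * v + q2 * (1 - e)) = 1 := by
    rw [hpq1, hpq2, one_mul]
  refine Ideal.mem_span_singleton'.mpr
    ⟨p1 * p2 * v + p1 * q2 * (1 - e) + q1 * e * p2, ?_⟩
  linear_combination hprod - q1 * q2 * hidem

private lemma bass_aux : ∀ (n : ℕ) {A : Type u} [CommRing A],
    ringKrullDim A < n → ∀ (a : A) (b : Fin n → A),
    (1 : A) ∈ Ideal.span (insert a (Set.range b)) →
    ∃ x : Fin n → A, (1 : A) ∈ Ideal.span (Set.range fun i => b i + a * x i) := by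
  intro n
  induction n with
  | zero =>
    intro A _ hdim a b _
    refine ⟨fun _ => 0, ?_⟩
    rw [dim_lt_zero_eq_zero hdim]
    exact zero_mem _
  | succ n ih =>
    intro A _ hdim a b hunim
    set l := b (Fin.last n) with hl
    set I : Ideal A := Ideal.span {l} ⊔ (nilradical A).colon (Ideal.span {l}) with hI
    set π : A →+* A ⧸ I := Ideal.Quotient.mk I with hπ
    have hlI : l ∈ I := Ideal.mem_sup_left (Ideal.mem_span_singleton_self l)
    have hπl : π l = 0 := Ideal.Quotient.eq_zero_iff_mem.mpr hlI
    have hdimB : ringKrullDim (A ⧸ I) < n := dim_quot_bdry_lt hdim l I hI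
    have hunimB : (1 : A ⧸ I) ∈ Ideal.span
        (insert (π a) (Set.range fun i : Fin n => π (b i.castSucc))) := by
      have h1 : (1 : A ⧸ I) ∈ Ideal.map π (Ideal.span (insert a (Set.range b))) := by
        simpa using Ideal.mem_map_of_mem π hunim
      rw [Ideal.map_span] at h1
      refine Ideal.span_le.mpr ?_ h1
      rintro y ⟨z, hz, rfl⟩
      rcases hz with rfl | ⟨i, rfl⟩
      · exact Ideal.subset_span (Set.mem_insert _ _)
      · rcases Fin.eq_castSucc_or_eq_last i with ⟨j, rfl⟩ | rfl
        · exact Ideal.subset_span (Set.mem_insert_iff.mpr (Or.inr ⟨j, rfl⟩))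
        · rw [← hl, hπl]; exact zero_mem _
    obtain ⟨xb, hxb⟩ := ih hdimB (π a) (fun i => π (b i.castSucc)) hunimB
    have hlift : ∀ i : Fin n, ∃ y : A, π y = xb i :=
      fun i => Ideal.Quotient.mk_surjective (xb i)
    choose x hx using hlift
    set J : Ideal A := Ideal.span (Set.range fun i : Fin n => b i.castSucc + a * x i) with hJ
    have h1JI : (1 : A) ∈ J ⊔ I := by
      have hmap : Ideal.map π J = Ideal.span (Set.range fun i : Fin n =>
          π (b i.castSucc) + π a * xb i) := by
        rw [hJ, Ideal.map_span]
        congr 1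
        ext y
        constructor
        · rintro ⟨z, ⟨i, rfl⟩, rfl⟩
          exact ⟨i, by rw [_root_.map_add, _root_.map_mul, hx]⟩
        · rintro ⟨i, rfl⟩
          exact ⟨b i.castSucc + a * x i, ⟨i, rfl⟩, by rw [_root_.map_add, _root_.map_mul, hx]⟩
      have h1m : (1 : A ⧸ I) ∈ Ideal.map π J := by rw [hmap]; exact hxb
      have h2 : (1 : A) ∈ Ideal.comap π (Ideal.map π J) := by
        rw [Ideal.mem_comap, _root_.map_one]; exact h1m
      rwa [Ideal.comap_map_of_surjective π Ideal.Quotient.mk_surjective,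
        ← RingHom.ker_eq_comap_bot, Ideal.mk_ker] at h2
    obtain ⟨j, hjJ, y, hyI, hjy⟩ := Submodule.mem_sup.mp h1JI
    obtain ⟨z, hz, w, hw, hzw⟩ := Submodule.mem_sup.mp hyI
    obtain ⟨u, hu⟩ := Ideal.mem_span_singleton'.mp hz
    have hwl : IsNilpotent (w * l) := mem_nilradical.mp (Ideal.mem_colon_span_singleton.mp hw)
    set ρ : A →+* A ⧸ J := Ideal.Quotient.mk J with hρ
    have hρj : ρ j = 0 := Ideal.Quotient.eq_zero_iff_mem.mpr hjJ
    have hA1 : u * l + w = 1 - j := by linear_combination hu + hzw + hjy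
    have h1C : ρ u * ρ l + ρ w = 1 := by
      rw [← _root_.map_mul, ← _root_.map_add, hA1, _root_.map_sub, _root_.map_one, hρj, sub_zero]
    have hnilC : IsNilpotent (ρ w * ρ l) := by
      rw [← _root_.map_mul]; exact hwl.map ρ
    have hunC : (1 : A ⧸ J) ∈ Ideal.span ({ρ a, ρ l} : Set (A ⧸ J)) := by
      have h1 : (1 : A ⧸ J) ∈ Ideal.map ρ (Ideal.span (insert a (Set.range b))) := by
        simpa using Ideal.mem_map_of_mem ρ hunim
      rw [Ideal.map_span] at h1
      refine Ideal.span_le.mpr ?_ h1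
      rintro y' ⟨z', hz', rfl⟩
      rcases hz' with rfl | ⟨i, rfl⟩
      · exact Ideal.subset_span (Set.mem_insert _ _)
      · rcases Fin.eq_castSucc_or_eq_last i with ⟨k, rfl⟩ | rfl
        · have hmem : b k.castSucc + a * x k ∈ J := Ideal.subset_span ⟨k, rfl⟩
          have h0 : ρ (b k.castSucc + a * x k) = 0 :=
            Ideal.Quotient.eq_zero_iff_mem.mpr hmem
          rw [_root_.map_add, _root_.map_mul] at h0
          have heq : ρ (b k.castSucc) = -(ρ a * ρ (x k)) := by linear_combination h0
          rw [heq]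
          exact neg_mem (Ideal.mul_mem_right _ _
            (Ideal.subset_span (Set.mem_insert _ _)))
        · rw [← hl]
          exact Ideal.subset_span (Set.mem_insert_iff.mpr (Or.inr rfl))
    obtain ⟨xc, hxc⟩ := core_lemma (ρ a) (ρ l) (ρ u) (ρ w) h1C hnilC hunC
    obtain ⟨xl, hxl⟩ := Ideal.Quotient.mk_surjective xc
    refine ⟨Fin.lastCases xl x, ?_⟩
    have hJK : J ≤ Ideal.span (Set.range fun i : Fin (n + 1) =>
        b i + a * (Fin.lastCases xl x : Fin (n + 1) → A) i) := by
      rw [hJ]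
      refine Ideal.span_le.mpr ?_
      rintro y' ⟨i, rfl⟩
      refine Ideal.subset_span ⟨i.castSucc, ?_⟩
      simp
    have hvK : l + a * xl ∈ Ideal.span (Set.range fun i : Fin (n + 1) =>
        b i + a * (Fin.lastCases xl x : Fin (n + 1) → A) i) := by
      refine Ideal.subset_span ⟨Fin.last n, ?_⟩
      simp [hl]
    rw [← hxl, ← _root_.map_mul, ← _root_.map_add] at hxc
    obtain ⟨cc, hcc⟩ := Ideal.mem_span_singleton'.mp hxc
    obtain ⟨c', hc'⟩ := Ideal.Quotient.mk_surjective cc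
    have hone : ρ (c' * (l + a * xl)) = 1 := by rw [_root_.map_mul, hc', hcc]
    have hmemJ : (1 : A) - c' * (l + a * xl) ∈ J :=
      Ideal.Quotient.eq_zero_iff_mem.mp
        (by rw [_root_.map_sub, _root_.map_one, hone, sub_self])
    have h1K : (1 : A) = (1 - c' * (l + a * xl)) + c' * (l + a * xl) := by ring
    rw [h1K]
    exact add_mem (hJK hmemJ) (Ideal.mul_mem_left _ _ hvK)

/-- Bass's stable range theorem, non-noetherian version with Krull dimension:
if `Kdim A < n` and `1 ∈ (a, b₁, …, bₙ)` then there exist `x₁, …, xₙ` with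
`1 ∈ (b₁ + a·x₁, …, bₙ + a·xₙ)`. -/
theorem bass_stable_range {A : Type*} [CommRing A] (n : ℕ)
    (hdim : ringKrullDim A < n) (a : A) (b : Fin n → A)
    (hunim : (1 : A) ∈ Ideal.span (insert a (Set.range b))) :
    ∃ x : Fin n → A, (1 : A) ∈ Ideal.span (Set.range fun i => b i + a * x i) := by
  exact bass_aux n hdim a b hunim
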